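/- Let C be a De Morgan clone with DMA ⊆ C. Then the following are equivalent: (1) for all f, g ∈ C of the same arity, if f and g have the same truth conditions (i.e., for every input tuple ā, f(ā) ∈ {t, b} iff g(ā) ∈ {t, b}), then f = g; (2) every function in C is harmonious, i.e., C ⊆ ⟨∧, ∨, t, f, −, ∂⟩. -/

import Mathlib

set_option autoImplicit false

/-- The four truth values of the Belnap–Dunn logic. -/
inductive DM4 : Type
  | t
  | f
  | n
  | b
deriving DecidableEq

namespace DM4

/-- De Morgan negation. -/
def neg : DM4 → DM4
  | t => f
  | f => t
  | n => n
  | b => b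

/-- Conflation. -/
def conf : DM4 → DM4
  | t => t
  | f => f
  | n => b
  | b => n

/-- Meet in the truth order. -/
def meet : DM4 → DM4 → DM4
  | f, _ => f
  | _, f => f
  | t, y => y
  | x, t => x
  | n, n => n
  | b, b => b
  | n, b => f
  | b, n => f

/-- Join in the truth order. -/
def join : DM4 → DM4 → DM4
  | t, _ => t
  | _, t => t
  | f, y => y
  | x, f => x
  | n, n => n
  | b, b => b
  | n, b => t
  | b, n => t

/-- Meet in the information order (⊗). -/
def imeet : DM4 → DM4 → DM4
  | n, _ => n
  | _, n => n
  | b, y => y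
  | x, b => x
  | t, t => t
  | f, f => f
  | t, f => n
  | f, t => n

/-- Join in the information order (⊕). -/
def ijoin : DM4 → DM4 → DM4
  | b, _ => b
  | _, b => b
  | n, y => y
  | x, n => x
  | t, t => t
  | f, f => f
  | t, f => b
  | f, t => b

/-- The truth order: least element `f`, greatest element `t`, with `n`, `b` incomparable. -/
def tle (x y : DM4) : Prop := x = y ∨ x = f ∨ y = t

/-- The information order: least element `n`, greatest element `b`, with `t`, `f` incomparable. -/
def ile (x y : DM4) : Prop := x = y ∨ x = n ∨ y = b

/-- □: maps t to t and everything else to f. -/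
def box : DM4 → DM4
  | t => t
  | _ => f

/-- ◇: maps f to f and everything else to t. -/
def diamond : DM4 → DM4
  | f => f
  | _ => t

/-- Δ: maps t, b to t and n, f to f. -/
def delta : DM4 → DM4
  | t => t
  | b => t
  | _ => f

/-- ∇: maps t, n to t and b, f to f. -/
def nabla : DM4 → DM4
  | t => t
  | n => t
  | _ => f

/-- id_{b↦n}: maps b to n and fixes t, f, n. -/
def idbn : DM4 → DM4
  | b => n
  | x => x

/-- id_{n↦b}: maps n to b and fixes t, f, b. -/
def idnb : DM4 → DM4
  | n => b
  | x => x

/-- id_{n↦t}: maps n to t and fixes t, f, b. -/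
def idnt : DM4 → DM4
  | n => t
  | x => x

/-- id_{b↦t}: maps b to t and fixes t, f, n. -/
def idbt : DM4 → DM4
  | b => t
  | x => x

/-- t_{n↦n}: maps n to n and everything else to t. -/
def tnn : DM4 → DM4
  | n => n
  | _ => t

/-- t_{b↦b}: maps b to b and everything else to t. -/
def tbb : DM4 → DM4
  | b => b
  | _ => t

/-- The binary function pbp²₁. -/
def pbp1 : DM4 → DM4 → DM4
  | t, t => t | t, f => f | t, n => f | t, b => b
  | f, t => t | f, f => f | f, n => f | f, b => b
  | n, t => t | n, f => f | n, n => n | n, b => b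
  | b, t => b | b, f => f | b, n => f | b, b => b

/-- The binary function pbp²₂. -/
def pbp2 : DM4 → DM4 → DM4
  | t, t => t | t, f => f | t, n => n | t, b => f
  | f, t => t | f, f => f | f, n => n | f, b => f
  | n, t => n | n, f => f | n, n => n | n, b => f
  | b, t => t | b, f => f | b, n => n | b, b => b

/-- The binary function mnh²₁. -/
def mnh1 : DM4 → DM4 → DM4
  | t, t => f | t, f => f | t, n => n | t, b => b
  | f, t => f | f, f => f | f, n => n | f, b => b
  | n, t => f | n, f => f | n, n => n | n, b => f
  | b, t => f | b, f => f | b, n => n | b, b => b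

/-- The binary function mnh²₂. -/
def mnh2 : DM4 → DM4 → DM4
  | t, t => f | t, f => f | t, n => n | t, b => b
  | f, t => f | f, f => f | f, n => n | f, b => b
  | n, t => f | n, f => f | n, n => n | n, b => b
  | b, t => f | b, f => f | b, n => f | b, b => b

/-- The binary function mhnp². -/
def mhnp2 : DM4 → DM4 → DM4
  | t, _ => t
  | f, _ => t
  | n, b => f
  | n, _ => n
  | b, n => f
  | b, _ => b

/-- The binary function mnp²₁. -/
def mnp1 : DM4 → DM4 → DM4
  | t, b => b
  | t, _ => t
  | f, b => b
  | f, _ => t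
  | n, b => f
  | n, _ => n
  | b, n => f
  | b, _ => b

/-- The binary function mnp²₂. -/
def mnp2 : DM4 → DM4 → DM4
  | t, _ => t
  | f, _ => t
  | n, _ => n
  | b, n => f
  | b, _ => b

/-- The binary function mnp²₃. -/
def mnp3 : DM4 → DM4 → DM4
  | t, n => n
  | t, _ => t
  | f, n => n
  | f, _ => t
  | n, b => f
  | n, _ => n
  | b, n => f
  | b, _ => b

/-- The binary function mnp²₄. -/
def mnp4 : DM4 → DM4 → DM4
  | t, _ => t
  | f, _ => t
  | n, b => f
  | n, _ => n
  | b, _ => b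

/-- The ternary function mhnp³. -/
def mhnp3 : DM4 → DM4 → DM4 → DM4
  | _, t, _ => f
  | _, f, _ => f
  | t, n, _ => n
  | f, n, _ => f
  | b, n, _ => f
  | n, n, b => f
  | n, n, _ => n
  | t, b, _ => b
  | f, b, _ => f
  | n, b, _ => f
  | b, b, n => f
  | b, b, _ => b

/-- The set of designated values. -/
def Des : Set DM4 := {t, b}

/-- Designatedness as a Boolean predicate. -/
def des : DM4 → Bool
  | t => true
  | b => true
  | _ => false

/-- The protoimplication →_{t-max}. -/
def tmax (x y : DM4) : DM4 :=
  match des x, des y with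
  | true, false => n
  | _, _ => t

/-- The protoimplication →_{i-max}. -/
def imax (x y : DM4) : DM4 :=
  match des x, des y with
  | true, false => f
  | _, _ => b

/-- The protoimplication ↔_{t-min}. -/
def tmin (x y : DM4) : DM4 := if x = y then b else f

/-- The protoimplication ↔_{i-min}. -/
def imin (x y : DM4) : DM4 := if x = y then t else n

/-- A binary operation is a protoimplication if it satisfies Reflexivity and Modus Ponens
with respect to the designated set {t, b}. -/
def IsProtoimplication (r : DM4 → DM4 → DM4) : Prop :=
  (∀ a : DM4, r a a ∈ Des) ∧ ∀ a c : DM4, a ∈ Des → r a c ∈ Des → c ∈ Des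

/-- `DMFun k` is the type of De Morgan functions of arity `k + 1` (arities are positive). -/
abbrev DMFun (k : ℕ) : Type := (Fin (k + 1) → DM4) → DM4

/-- Membership in the clone generated by the family of operations `S`
(`S k` is the set of generators of arity `k + 1`). -/
inductive InClone (S : ∀ k : ℕ, Set (DMFun k)) : ∀ k : ℕ, DMFun k → Prop
  | base {k : ℕ} {g : DMFun k} : g ∈ S k → InClone S k g
  | proj {k : ℕ} (i : Fin (k + 1)) : InClone S k (fun x => x i)
  | comp {k m : ℕ} {g : DMFun m} {h : Fin (m + 1) → DMFun k} :
      InClone S m g → (∀ i, InClone S k (h i)) →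
      InClone S k (fun x => g (fun i => h i x))

/-- A family of sets of De Morgan functions is a clone if it contains all projections
and is closed under composition. -/
structure IsClone (C : ∀ k : ℕ, Set (DMFun k)) : Prop where
  proj : ∀ (k : ℕ) (i : Fin (k + 1)), (fun x => x i) ∈ C k
  comp : ∀ (k m : ℕ) (g : DMFun m) (h : Fin (m + 1) → DMFun k),
      g ∈ C m → (∀ i, h i ∈ C k) → (fun x => g (fun i => h i x)) ∈ C k

/-- The generating family consisting of a single unary operation. -/
def op1 (g : DM4 → DM4) : ∀ k : ℕ, Set (DMFun k)
  | 0 => {fun x => g (x 0)}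
  | _ + 1 => ∅

/-- The generating family consisting of a single binary operation. -/
def op2 (g : DM4 → DM4 → DM4) : ∀ k : ℕ, Set (DMFun k)
  | 1 => {fun x => g (x 0) (x 1)}
  | _ => ∅

/-- The generating family consisting of a single ternary operation. -/
def op3 (g : DM4 → DM4 → DM4 → DM4) : ∀ k : ℕ, Set (DMFun k)
  | 2 => {fun x => g (x 0) (x 1) (x 2)}
  | _ => ∅

/-- Union of two families of operations. -/
def funion (S T : ∀ k : ℕ, Set (DMFun k)) : ∀ k : ℕ, Set (DMFun k) := fun k => S k ∪ T k

infixr:65 " ⊹ " => funion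

/-- The generators of DLat: ∧, ∨, t, f (constants as unary constant functions). -/
def DLatGen : ∀ k : ℕ, Set (DMFun k) :=
  op2 meet ⊹ op2 join ⊹ op1 (fun _ => t) ⊹ op1 (fun _ => f)

/-- The generators of DMA: ∧, ∨, t, f, −. -/
def DMAGen : ∀ k : ℕ, Set (DMFun k) := DLatGen ⊹ op1 neg

/-- The generators of BiLat: ∧, ∨, t, f, ⊗, ⊕, n, b. -/
def BiLatGen : ∀ k : ℕ, Set (DMFun k) :=
  DLatGen ⊹ op2 imeet ⊹ op2 ijoin ⊹ op1 (fun _ => n) ⊹ op1 (fun _ => b)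

/-- A De Morgan function is harmonious if it commutes with conflation. -/
def Harmonious {k : ℕ} (g : DMFun k) : Prop :=
  ∀ x : Fin (k + 1) → DM4, g (fun i => conf (x i)) = conf (g x)

/-- A De Morgan function is positive if it is monotone in the componentwise truth order. -/
def Positive {k : ℕ} (g : DMFun k) : Prop :=
  ∀ x y : Fin (k + 1) → DM4, (∀ i, tle (x i) (y i)) → tle (g x) (g y)

/-- A De Morgan function is persistent if it is monotone in the componentwise
information order. -/
def Persistent {k : ℕ} (g : DMFun k) : Prop :=
  ∀ x y : Fin (k + 1) → DM4, (∀ i, ile (x i) (y i)) → ile (g x) (g y)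

/-- A De Morgan function preserves a subset X of DM4 if it maps tuples from X into X. -/
def Preserves {k : ℕ} (g : DMFun k) (X : Set DM4) : Prop :=
  ∀ x : Fin (k + 1) → DM4, (∀ i, x i ∈ X) → g x ∈ X

def B2 : Set DM4 := {t, f}
def K3 : Set DM4 := {t, n, f}
def P3 : Set DM4 := {t, b, f}

/-- A unary operation as a De Morgan function. -/
def toF1 (g : DM4 → DM4) : DMFun 0 := fun x => g (x 0)

/-- A binary operation as a De Morgan function. -/
def toF2 (g : DM4 → DM4 → DM4) : DMFun 1 := fun x => g (x 0) (x 1)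

/-- A ternary operation as a De Morgan function. -/
def toF3 (g : DM4 → DM4 → DM4 → DM4) : DMFun 2 := fun x => g (x 0) (x 1) (x 2)

/-- The clone generated by a family of operations, as a family of sets. -/
def CloneOf (S : ∀ k : ℕ, Set (DMFun k)) : ∀ k : ℕ, Set (DMFun k) :=
  fun k => {g | InClone S k g}

/-- Inclusion of families of operations. -/
def CloneLE (C D : ∀ k : ℕ, Set (DMFun k)) : Prop := ∀ k : ℕ, C k ⊆ D k



/-! ### Auxiliary material for the proof -/

instance : Fintype DM4 where
  elems := ⟨↑[t, f, n, b], by decide⟩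
  complete := fun x => by cases x <;> decide

section Aux

/-- `x ∨ ¬x`: sends t, f to t and fixes n, b. -/
def j4 (a : DM4) : DM4 := join a (neg a)
/-- `x ∧ ¬x`: sends t, f to f and fixes n, b. -/
def m4 (a : DM4) : DM4 := meet a (neg a)

/-- The masked version of a candidate non-harmonious binary function. -/
def Ht (y z w : DM4) : DM4 := join (meet w (join (m4 y) (m4 z))) (meet (j4 y) (j4 z))
/-- DMA partner used when `u n b = b`. -/
def GB (y z : DM4) : DM4 := join (meet (j4 y) (j4 z)) (join (m4 y) (m4 z))
/-- DMA partner used when `u n b = f`. -/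
def GF (y z : DM4) : DM4 := meet (j4 y) (join (j4 z) (m4 y))
/-- DMA partner used when `u n b = t`. -/
def GT (y z : DM4) : DM4 := meet (join (j4 y) (m4 z)) (j4 z)
/-- DMA partner used when `u n b = n`. -/
def GN (y z : DM4) : DM4 := meet (j4 y) (j4 z)

/-- Selector used to turn a non-harmonious function into a binary one. -/
def sel (a y z : DM4) : DM4 :=
  match a with
  | n => y
  | b => z
  | t => t
  | f => f

lemma sel_nb (a : DM4) : sel a n b = a := by cases a <;> rfl
lemma sel_bn (a : DM4) : sel a b n = conf a := by cases a <;> rfl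

lemma desD (a : DM4) : a ∈ Des ↔ des a = true := by cases a <;> simp [Des, des]

lemma LB : ∀ y z w : DM4, (y = n → z = b → w = b) → (y = b → z = n → des w = true) →
    des (Ht y z w) = des (GB y z) := by decide

lemma LF : ∀ y z w : DM4, (y = n → z = b → w = f) → (y = b → z = n → des w = true) →
    des (Ht y z w) = des (GF y z) := by decide

lemma LT : ∀ y z w : DM4, (y = n → z = b → w = t) → (y = b → z = n → des w = false) →
    des (Ht y z w) = des (GT y z) := by decide

lemma LN : ∀ y z w : DM4, (y = n → z = b → w = n) → (y = b → z = n → des w = false) →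
    des (Ht y z w) = des (GN y z) := by decide

lemma diff4 : Ht n b b ≠ GB n b ∧ Ht n b f ≠ GF n b ∧ Ht n b t ≠ GT n b ∧
    Ht n b n ≠ GN n b := by decide

lemma split_cases : ∀ a c : DM4, conf a ≠ c → des (neg a) = des c ∨ des a = des (neg c) := by
  decide

lemma conf_swap : ∀ a c : DM4, conf a ≠ c → conf c ≠ a := by decide

lemma val_det : ∀ a c : DM4, des a = des c → des (conf a) = des (conf c) → a = c := by decide

end Aux

/-- For a clone C above DMA, the following are equivalent:
(1) any two functions of C with the same truth conditions are equal
(selfextensionality); (2) every function in C is harmonious. -/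
theorem selfextensional_clones (C : ∀ k : ℕ, Set (DMFun k))
    (hC : IsClone C) (hDMA : ∀ k g, InClone DMAGen k g → g ∈ C k) :
    (∀ (k : ℕ) (g h : DMFun k), g ∈ C k → h ∈ C k →
      (∀ x : Fin (k + 1) → DM4, (g x ∈ Des ↔ h x ∈ Des)) → g = h) ↔
    (∀ k : ℕ, ∀ g ∈ C k, Harmonious g) := by
  constructor
  · -- selfextensionality implies harmoniousness
    intro hse
    -- basic memberships coming from DMA
    have hmeetG : (fun v : Fin 2 → DM4 => meet (v 0) (v 1)) ∈ C 1 :=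
      hDMA 1 _ (InClone.base (Or.inl (Or.inl rfl)))
    have hjoinG : (fun v : Fin 2 → DM4 => join (v 0) (v 1)) ∈ C 1 :=
      hDMA 1 _ (InClone.base (Or.inl (Or.inr (Or.inl rfl))))
    have hnegG : (fun v : Fin 1 → DM4 => neg (v 0)) ∈ C 0 :=
      hDMA 0 _ (InClone.base (Or.inr rfl))
    have htG : (fun v : Fin 1 → DM4 => DM4.t) ∈ C 0 :=
      hDMA 0 _ (InClone.base (Or.inl (Or.inr (Or.inr (Or.inl rfl)))))
    have hfG : (fun v : Fin 1 → DM4 => DM4.f) ∈ C 0 :=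
      hDMA 0 _ (InClone.base (Or.inl (Or.inr (Or.inr (Or.inr rfl)))))
    -- combinators
    have memMeet : ∀ {k : ℕ} {φ ψ : DMFun k}, φ ∈ C k → ψ ∈ C k →
        (fun x => meet (φ x) (ψ x)) ∈ C k := by
      intro k φ ψ hφ hψ
      exact hC.comp k 1 _ (Fin.cases φ (fun _ => ψ)) hmeetG
        (fun i => Fin.cases hφ (fun _ => hψ) i)
    have memJoin : ∀ {k : ℕ} {φ ψ : DMFun k}, φ ∈ C k → ψ ∈ C k →
        (fun x => join (φ x) (ψ x)) ∈ C k := by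
      intro k φ ψ hφ hψ
      exact hC.comp k 1 _ (Fin.cases φ (fun _ => ψ)) hjoinG
        (fun i => Fin.cases hφ (fun _ => hψ) i)
    have memNeg : ∀ {k : ℕ} {φ : DMFun k}, φ ∈ C k → (fun x => neg (φ x)) ∈ C k := by
      intro k φ hφ
      exact hC.comp k 0 _ (fun _ => φ) hnegG (fun _ => hφ)
    have memT : ∀ {k : ℕ}, (fun _ : Fin (k + 1) → DM4 => DM4.t) ∈ C k := by
      intro k
      exact hC.comp k 0 _ (fun _ x => x 0) htG (fun _ => hC.proj k 0)
    have memF : ∀ {k : ℕ}, (fun _ : Fin (k + 1) → DM4 => DM4.f) ∈ C k := by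
      intro k
      exact hC.comp k 0 _ (fun _ x => x 0) hfG (fun _ => hC.proj k 0)
    -- the key lemma, first under a normalizing assumption
    have case1 : ∀ u : DM4 → DM4 → DM4,
        ((fun v : Fin 2 → DM4 => u (v 0) (v 1)) ∈ C 1) →
        des (neg (u n b)) = des (u b n) → False := by
      intro u hu hdes
      have p0 : (fun v : Fin 2 → DM4 => v 0) ∈ C 1 := hC.proj 1 0
      have p1 : (fun v : Fin 2 → DM4 => v 1) ∈ C 1 := hC.proj 1 1
      have hj0 : (fun v : Fin 2 → DM4 => j4 (v 0)) ∈ C 1 := memJoin p0 (memNeg p0)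
      have hj1 : (fun v : Fin 2 → DM4 => j4 (v 1)) ∈ C 1 := memJoin p1 (memNeg p1)
      have hm0 : (fun v : Fin 2 → DM4 => m4 (v 0)) ∈ C 1 := memMeet p0 (memNeg p0)
      have hm1 : (fun v : Fin 2 → DM4 => m4 (v 1)) ∈ C 1 := memMeet p1 (memNeg p1)
      have hH : (fun v : Fin 2 → DM4 => Ht (v 0) (v 1) (u (v 0) (v 1))) ∈ C 1 :=
        memJoin (memMeet hu (memJoin hm0 hm1)) (memMeet hj0 hj1)
      cases hA : u n b with
      | t =>
        have hC0 : des (u b n) = false := by rw [hA] at hdes; exact hdes.symm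
        have hGmem : (fun v : Fin 2 → DM4 => GT (v 0) (v 1)) ∈ C 1 :=
          memMeet (memJoin hj0 hm1) hj1
        have heq := hse 1 _ _ hH hGmem (by
          intro v
          show Ht (v 0) (v 1) (u (v 0) (v 1)) ∈ Des ↔ GT (v 0) (v 1) ∈ Des
          rw [desD, desD, LT (v 0) (v 1) (u (v 0) (v 1))
            (fun h1 h2 => by rw [h1, h2]; exact hA)
            (fun h1 h2 => by rw [h1, h2]; exact hC0)])
        have h2 : Ht n b (u n b) = GT n b := congrFun heq ![n, b]
        rw [hA] at h2
        exact diff4.2.2.1 h2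
      | f =>
        have hC0 : des (u b n) = true := by rw [hA] at hdes; exact hdes.symm
        have hGmem : (fun v : Fin 2 → DM4 => GF (v 0) (v 1)) ∈ C 1 :=
          memMeet hj0 (memJoin hj1 hm0)
        have heq := hse 1 _ _ hH hGmem (by
          intro v
          show Ht (v 0) (v 1) (u (v 0) (v 1)) ∈ Des ↔ GF (v 0) (v 1) ∈ Des
          rw [desD, desD, LF (v 0) (v 1) (u (v 0) (v 1))
            (fun h1 h2 => by rw [h1, h2]; exact hA)
            (fun h1 h2 => by rw [h1, h2]; exact hC0)])
        have h2 : Ht n b (u n b) = GF n b := congrFun heq ![n, b]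
        rw [hA] at h2
        exact diff4.2.1 h2
      | n =>
        have hC0 : des (u b n) = false := by rw [hA] at hdes; exact hdes.symm
        have hGmem : (fun v : Fin 2 → DM4 => GN (v 0) (v 1)) ∈ C 1 := memMeet hj0 hj1
        have heq := hse 1 _ _ hH hGmem (by
          intro v
          show Ht (v 0) (v 1) (u (v 0) (v 1)) ∈ Des ↔ GN (v 0) (v 1) ∈ Des
          rw [desD, desD, LN (v 0) (v 1) (u (v 0) (v 1))
            (fun h1 h2 => by rw [h1, h2]; exact hA)
            (fun h1 h2 => by rw [h1, h2]; exact hC0)])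
        have h2 : Ht n b (u n b) = GN n b := congrFun heq ![n, b]
        rw [hA] at h2
        exact diff4.2.2.2 h2
      | b =>
        have hC0 : des (u b n) = true := by rw [hA] at hdes; exact hdes.symm
        have hGmem : (fun v : Fin 2 → DM4 => GB (v 0) (v 1)) ∈ C 1 :=
          memJoin (memMeet hj0 hj1) (memJoin hm0 hm1)
        have heq := hse 1 _ _ hH hGmem (by
          intro v
          show Ht (v 0) (v 1) (u (v 0) (v 1)) ∈ Des ↔ GB (v 0) (v 1) ∈ Des
          rw [desD, desD, LB (v 0) (v 1) (u (v 0) (v 1))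
            (fun h1 h2 => by rw [h1, h2]; exact hA)
            (fun h1 h2 => by rw [h1, h2]; exact hC0)])
        have h2 : Ht n b (u n b) = GB n b := congrFun heq ![n, b]
        rw [hA] at h2
        exact diff4.1 h2
    -- the key lemma: no binary member of C violates harmony at (n, b)
    have bin_ce : ∀ u : DM4 → DM4 → DM4,
        ((fun v : Fin 2 → DM4 => u (v 0) (v 1)) ∈ C 1) →
        conf (u n b) ≠ u b n → False := by
      intro u hu hne
      rcases split_cases _ _ hne with h | h
      · exact case1 u hu h
      · have hu' : (fun v : Fin 2 → DM4 => u (v 1) (v 0)) ∈ C 1 := by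
          have := hC.comp 1 1 (fun v : Fin 2 → DM4 => u (v 0) (v 1))
            (Fin.cases (motive := fun _ => DMFun 1) (fun v => v 1) (fun _ v => v 0)) hu
            (by
              intro i
              induction i using Fin.cases with
              | zero => exact hC.proj 1 1
              | succ j => exact hC.proj 1 0)
          exact this
        exact case1 (fun y z => u z y) hu' h.symm
    -- conclude: every member of C is harmonious
    intro k g hg x
    by_contra hx
    have hu : (fun v : Fin 2 → DM4 =>
        (fun y z => g (fun i => sel (x i) y z)) (v 0) (v 1)) ∈ C 1 := by
      refine hC.comp 1 k g (fun i => (fun v : Fin 2 → DM4 => sel (x i) (v 0) (v 1))) hg ?_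
      intro i
      show (fun v : Fin 2 → DM4 => sel (x i) (v 0) (v 1)) ∈ C 1
      rcases x i with _ | _ | _ | _
      · exact memT
      · exact memF
      · exact hC.proj 1 0
      · exact hC.proj 1 1
    refine bin_ce (fun y z => g (fun i => sel (x i) y z)) hu ?_
    have e1 : g (fun i => sel (x i) n b) = g x :=
      congrArg g (funext fun i => sel_nb (x i))
    have e2 : g (fun i => sel (x i) b n) = g (fun i => conf (x i)) :=
      congrArg g (funext fun i => sel_bn (x i))
    show conf (g (fun i => sel (x i) n b)) ≠ g (fun i => sel (x i) b n)
    rw [e1, e2]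
    exact Ne.symm hx
  · -- harmoniousness implies selfextensionality
    intro hharm k g h hg hh hiff
    funext x
    have h1 : des (g x) = des (h x) := by
      have := hiff x
      rw [desD, desD] at this
      cases hgx : des (g x) <;> cases hhx : des (h x) <;> simp_all
    have h2 : des (conf (g x)) = des (conf (h x)) := by
      have hgx := hharm k g hg x
      have hhx := hharm k h hh x
      have := hiff (fun i => conf (x i))
      rw [hgx, hhx, desD, desD] at this
      cases hgc : des (conf (g x)) <;> cases hhc : des (conf (h x)) <;> simp_all
    exact val_det _ _ h1 h2

end DM4
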